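/- Let T(F, υ, κ) := F ⊙ (d̃_M(υ, κ) 1_{1,N}) be the column-wise phase-shift of a matrix F ∈ ℂ^{M×N}. Then for any F ∈ ℂ^{M×N}, v ∈ ℂ^N, and shifts Δ_h, Δ_v: G(ψ_h, ψ_v, F v) = G(ψ_h + Δ_h, ψ_v + Δ_v, T(F, Δ_h, Δ_v) v), i.e., multiplying each column of F entrywise by the unit-modulus steering vector d̃_M(Δ_h, Δ_v) shifts the beam pattern by (Δ_h, Δ_v). -/

import Mathlib

open scoped Real ComplexConjugate

/-- Normalized array response vector `d_{M_a}(ψ)`. -/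
noncomputable def arrayVec (Ma : ℕ) (ψ : ℝ) : Fin Ma → ℂ :=
  fun m => Complex.exp (Complex.I * ((m : ℕ) : ℂ) * (ψ : ℂ)) / (Real.sqrt Ma : ℂ)

/-- The entrywise-unit-modulus steering vector `d̃_M(ψ_h, ψ_v) = √M · d_M(ψ_h, ψ_v)`. -/
noncomputable def steerVec (Mh Mv : ℕ) (ψh ψv : ℝ) : Fin Mh × Fin Mv → ℂ :=
  fun p => (Real.sqrt (Mh * Mv) : ℂ) * (arrayVec Mh ψh p.1 * arrayVec Mv ψv p.2)

/-- Reference gain `G(ψ_h, ψ_v, c) = |(d_{M_h}(ψ_h) ⊗ d_{M_v}(ψ_v))^H c|²`. -/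
noncomputable def refGain (Mh Mv : ℕ) (ψh ψv : ℝ) (c : Fin Mh × Fin Mv → ℂ) : ℝ :=
  ‖∑ p : Fin Mh × Fin Mv,
    conj (arrayVec Mh ψh p.1 * arrayVec Mv ψv p.2) * c p‖ ^ 2

/-- Column-wise phase shift `T(F, υ, κ) = F ⊙ (d̃_M(υ, κ) 1_{1,N})`. -/
noncomputable def phaseShift (Mh Mv N : ℕ) (F : Fin Mh × Fin Mv → Fin N → ℂ)
    (υ κ : ℝ) : Fin Mh × Fin Mv → Fin N → ℂ :=
  fun p n => F p n * steerVec Mh Mv υ κ p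


private lemma refGain_key (Ma : ℕ) (hMa : 0 < Ma) (ψ Δ : ℝ) (m : Fin Ma) :
    conj (arrayVec Ma (ψ+Δ) m) * ((Real.sqrt Ma : ℂ) * arrayVec Ma Δ m)
      = conj (arrayVec Ma ψ m) := by
  have hs : (Real.sqrt Ma : ℂ) ≠ 0 := by
    simp [Real.sqrt_eq_zero', not_le, Nat.cast_pos, hMa, hMa.ne']
  simp only [arrayVec, map_div₀, Complex.conj_ofReal, ← Complex.exp_conj, map_mul,
    Complex.conj_I, Complex.conj_natCast]
  field_simp
  rw [← Complex.exp_add]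
  congr 1
  push_cast
  ring

private lemma refGain_key2 (Mh Mv : ℕ) (hMh : 0 < Mh) (hMv : 0 < Mv)
    (ψh ψv Δh Δv : ℝ) (p : Fin Mh × Fin Mv) :
    conj (arrayVec Mh (ψh+Δh) p.1 * arrayVec Mv (ψv+Δv) p.2) * steerVec Mh Mv Δh Δv p
      = conj (arrayVec Mh ψh p.1 * arrayVec Mv ψv p.2) := by
  have h1 := refGain_key Mh hMh ψh Δh p.1
  have h2 := refGain_key Mv hMv ψv Δv p.2
  have hsqrt : (Real.sqrt (Mh*Mv) : ℂ) = (Real.sqrt Mh : ℂ) * (Real.sqrt Mv : ℂ) := by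
    push_cast [Real.sqrt_mul (Nat.cast_nonneg Mh)]
    ring
  rw [steerVec, map_mul, map_mul, hsqrt]
  linear_combination (conj (arrayVec Mv (ψv+Δv) p.2) * ((Real.sqrt Mv : ℂ) * arrayVec Mv Δv p.2)) * h1
    + conj (arrayVec Mh ψh p.1) * h2

/-- Lemma 4 (beam-shift identity): multiplying each column of `F` entrywise by the
unit-modulus steering vector `d̃_M(Δ_h, Δ_v)` shifts the beam pattern by `(Δ_h, Δ_v)`:
`G(ψ_h, ψ_v, F v) = G(ψ_h + Δ_h, ψ_v + Δ_v, T(F, Δ_h, Δ_v) v)`. -/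
theorem refGain_phaseShift (Mh Mv N : ℕ) (hMh : 0 < Mh) (hMv : 0 < Mv)
    (F : Fin Mh × Fin Mv → Fin N → ℂ) (v : Fin N → ℂ) (ψh ψv Δh Δv : ℝ) :
    refGain Mh Mv ψh ψv (fun p => ∑ n : Fin N, F p n * v n)
      = refGain Mh Mv (ψh + Δh) (ψv + Δv)
          (fun p => ∑ n : Fin N, phaseShift Mh Mv N F Δh Δv p n * v n) := by
  unfold refGain
  congr 1
  refine congrArg (fun z : ℂ => ‖z‖) ?_
  refine Finset.sum_congr rfl fun p _ => ?_
  rw [Finset.mul_sum, Finset.mul_sum]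
  refine Finset.sum_congr rfl fun n _ => ?_
  have hk := refGain_key2 Mh Mv hMh hMv ψh ψv Δh Δv p
  simp only [phaseShift]
  linear_combination (-(F p n * v n)) * hk
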